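/- Let G = K_{2k+3} with k ≥ 1, let C = (v_1,...,v_{2k+1}) be a cycle of length 2k+1 in G and let s,t be the two remaining vertices. For each chord {v_i,v_j} of C define ℓ({v_i,v_j}) = |j-i| if |j-i| is odd and 2k+1-|j-i| otherwise. Then the C-induced constraint x({s,t}) + k·x(δ(C)) + Σ_{e ∈ E[V∖{s,t}]} ℓ(e)·x(e) ≥ 2k+1 is satisfied by the incidence vector of every odd cycle of G. -/

import Mathlib

open SimpleGraph

/-- The odd-path length `ℓ` along the cycle `C = (v_0, …, v_{2k})` between the cycle
vertices with indices `a < b`: it is `b - a` if that is odd, and `2k+1 - (b - a)`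
otherwise. -/
def ellLen (k a b : ℕ) : ℕ :=
  if (max a b - min a b) % 2 = 1 then max a b - min a b
  else 2 * k + 1 - (max a b - min a b)

/-- Coefficients of the `C`-induced constraint on `K_{2k+3}`: the vertices `0, …, 2k`
form the cycle `C`, and `s = 2k+1`, `t = 2k+2` are the two remaining vertices.
The edge `{s,t}` has coefficient `1`, the edges of `δ(C)` have coefficient `k`,
and an edge between two cycle vertices has coefficient `ℓ`.  (Diagonal pairs get `0`.) -/
def cCoeffFun (k a b : ℕ) : ℕ :=
  if a = b then 0
  else if max a b < 2 * k + 1 then ellLen k a b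
  else if min a b < 2 * k + 1 then k
  else 1

def cCoeff (k : ℕ) : Sym2 (Fin (2 * k + 3)) → ℕ :=
  Sym2.lift ⟨fun a b => cCoeffFun k a.val b.val, fun a b => by
    simp only [cCoeffFun, ellLen, Nat.max_comm, Nat.min_comm, eq_comm]⟩

/-! ### Auxiliary lemmas -/

section Aux

/-- Signed odd displacement along the cycle associated to an ordered pair of
cycle vertices. -/
def dD (k : ℕ) (a b : Fin (2 * k + 3)) : ℤ :=
  if (a.val + b.val) % 2 = 1 then (b.val : ℤ) - a.val
  else if a.val < b.val then (b.val : ℤ) - a.val - (2 * k + 1)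
  else (b.val : ℤ) - a.val + (2 * k + 1)

lemma dD_sub_dvd (k : ℕ) (a b : Fin (2 * k + 3)) :
    (2 * (k : ℤ) + 1) ∣ (dD k a b - ((b.val : ℤ) - a.val)) := by
  unfold dD; split_ifs
  · simp
  · exact ⟨-1, by ring⟩
  · exact ⟨1, by ring⟩

lemma dD_odd (k : ℕ) (a b : Fin (2 * k + 3)) : dD k a b % 2 = 1 := by
  unfold dD; split_ifs <;> omega

lemma dD_natAbs (k : ℕ) (a b : Fin (2 * k + 3)) (hab : a.val ≠ b.val)
    (ha : a.val < 2 * k + 1) (hb : b.val < 2 * k + 1) :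
    (dD k a b).natAbs = cCoeffFun k a.val b.val := by
  unfold dD cCoeffFun ellLen
  split_ifs <;> omega

lemma cCoeffFun_pos (k a b : ℕ) (hk : 1 ≤ k) (hab : a ≠ b)
    (ha : a < 2 * k + 3) (hb : b < 2 * k + 3) : 1 ≤ cCoeffFun k a b := by
  unfold cCoeffFun ellLen
  split_ifs <;> omega

lemma cCoeffFun_delta (k x : ℕ) (hx : x < 2 * k + 1) : cCoeffFun k (2 * k + 1) x = k := by
  unfold cCoeffFun ellLen; split_ifs <;> omega

lemma cCoeffFun_delta2 (k x : ℕ) (hx : x < 2 * k + 1) : cCoeffFun k (2 * k + 2) x = k := by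
  unfold cCoeffFun ellLen; split_ifs <;> omega

lemma cCoeffFun_st (k : ℕ) : cCoeffFun k (2 * k + 1) (2 * k + 2) = 1 := by
  unfold cCoeffFun ellLen; split_ifs <;> omega

lemma cCoeff_mk (k : ℕ) (a b : Fin (2 * k + 3)) :
    cCoeff k s(a, b) = cCoeffFun k a.val b.val := rfl

lemma telescope {V : Type*} {G : SimpleGraph V} (f : V → ℤ) {a b : V} (w : G.Walk a b) :
    (w.darts.map (fun d => f d.snd - f d.fst)).sum = f b - f a := by
  induction w with
  | nil => simp
  | cons h q ih => simp only [SimpleGraph.Walk.darts_cons, List.map_cons, List.sum_cons, ih]; ring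

lemma sum_mod_two (l : List ℤ) (h : ∀ x ∈ l, x % 2 = 1) : l.sum % 2 = l.length % 2 := by
  induction l with
  | nil => simp
  | cons x l ih =>
    simp only [List.sum_cons, List.length_cons]
    have hx := h x (by simp)
    have := ih (fun y hy => h y (by simp [hy]))
    omega

lemma abs_list_sum (l : List ℤ) : |l.sum| ≤ (l.map (fun x => |x|)).sum := by
  induction l with
  | nil => simp
  | cons x l ih =>
    simp only [List.sum_cons, List.map_cons]
    exact (abs_add_le _ _).trans (by gcongr)

lemma sum_map_split {α : Type*} (l : List α) (f g : α → ℤ) :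
    (l.map f).sum = (l.map (fun x => f x - g x)).sum + (l.map g).sum := by
  induction l with
  | nil => simp
  | cons x l ih => simp only [List.map_cons, List.sum_cons, ih]; ring

lemma endpoint_mem_edge {V : Type*} {G : SimpleGraph V} {a b : V} (w : G.Walk a b)
    (hw : ¬ w.Nil) : ∃ e ∈ w.edges, b ∈ e := by
  have hrev : ¬ w.reverse.Nil := by
    rw [SimpleGraph.Walk.nil_iff_length_eq] at hw ⊢
    simpa using hw
  obtain ⟨x, h, q, hq⟩ := SimpleGraph.Walk.not_nil_iff.mp hrev
  refine ⟨s(b, x), ?_, by simp⟩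
  have : s(b, x) ∈ w.reverse.edges := by rw [hq]; simp
  rwa [SimpleGraph.Walk.edges_reverse, List.mem_reverse] at this

/-- In a cycle, every support vertex lies on (at least) two distinct edges. -/
lemma exists_two_edges {V : Type*} {G : SimpleGraph V} {v s : V} (p : G.Walk v v)
    (hc : p.IsCycle) (hs : s ∈ p.support) :
    ∃ e1 e2, e1 ∈ p.edges ∧ e2 ∈ p.edges ∧ e1 ≠ e2 ∧ s ∈ e1 ∧ s ∈ e2 := by
  classical
  have hq : (p.rotate s hs).IsCycle := hc.rotate hs
  have hperm : ((p.rotate s hs).edges).Perm p.edges := (p.rotate_edges s hs).perm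
  set q := p.rotate s hs with hqdef
  obtain ⟨x, h, r, hr⟩ := SimpleGraph.Walk.not_nil_iff.mp hq.not_nil
  have hcyc := hr ▸ hq
  rw [SimpleGraph.Walk.cons_isCycle_iff] at hcyc
  have hlen : 3 ≤ q.length := hq.three_le_length
  have hrnil : ¬ r.Nil := by
    rw [SimpleGraph.Walk.nil_iff_length_eq]
    have : q.length = r.length + 1 := by rw [hr]; simp
    omega
  obtain ⟨e2, he2, hse2⟩ := endpoint_mem_edge r hrnil
  refine ⟨s(s, x), e2, ?_, ?_, ?_, by simp, hse2⟩
  · exact hperm.mem_iff.mp (by rw [hr]; simp)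
  · exact hperm.mem_iff.mp (by rw [hr]; simp [he2])
  · rintro rfl; exact hcyc.2 he2

lemma cCoeff_pos_of_mem (k : ℕ) (hk : 1 ≤ k) {u v : Fin (2 * k + 3)}
    (p : (⊤ : SimpleGraph (Fin (2 * k + 3))).Walk u v)
    {e : Sym2 (Fin (2 * k + 3))} (he : e ∈ p.edges) : 1 ≤ cCoeff k e := by
  revert he
  induction e using Sym2.ind with
  | _ x y =>
    intro he
    have hxy : x ≠ y := (p.adj_of_mem_edges he).ne
    rw [cCoeff_mk]
    exact cCoeffFun_pos k x.val y.val hk (fun h => hxy (Fin.ext h)) x.isLt y.isLt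

/-- If a vertex `w` of the cycle has the property that all its incident edges have
coefficient `k`, then the constraint holds (using one extra edge of the cycle). -/
lemma two_plus (k : ℕ) (hk : 1 ≤ k) {u w : Fin (2 * k + 3)}
    (p : (⊤ : SimpleGraph (Fin (2 * k + 3))).Walk u u) (hc : p.IsCycle)
    (hw : w ∈ p.support)
    (hcoeff : ∀ e ∈ p.edges, w ∈ e → cCoeff k e = k) :
    2 * k + 1 ≤ (p.edges.map (cCoeff k)).sum := by
  classical
  have hnodup : p.edges.Nodup := hc.edges_nodup
  obtain ⟨e1, e2, he1, he2, hee, hse1, hse2⟩ := exists_two_edges p hc hw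
  set E0 := p.edges.toFinset with hE0
  have hsum : (p.edges.map (cCoeff k)).sum = ∑ e ∈ E0, cCoeff k e :=
    (List.sum_toFinset _ hnodup).symm
  set T : Finset (Sym2 (Fin (2 * k + 3))) := {e1, e2} with hT
  have hTsub : T ⊆ E0 := by
    intro x hx
    simp only [hT, Finset.mem_insert, Finset.mem_singleton] at hx
    rcases hx with rfl | rfl <;> simp [hE0, he1, he2]
  have hTsum : ∑ e ∈ T, cCoeff k e = k + k := by
    rw [hT, Finset.sum_insert (by simp [hee]), Finset.sum_singleton,
      hcoeff e1 he1 hse1, hcoeff e2 he2 hse2]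
  have hsplit : ∑ e ∈ E0 \ T, cCoeff k e + ∑ e ∈ T, cCoeff k e = ∑ e ∈ E0, cCoeff k e :=
    Finset.sum_sdiff hTsub
  have hcard : 1 ≤ (E0 \ T).card := by
    have h1 : E0.card = p.length := by
      rw [hE0, List.toFinset_card_of_nodup hnodup, SimpleGraph.Walk.length_edges]
    have h2 : T.card ≤ 2 := by
      rw [hT]; exact (Finset.card_insert_le _ _).trans (by simp)
    have h3 := hc.three_le_length
    have := Finset.le_card_sdiff T E0
    omega
  have hrest : (E0 \ T).card ≤ ∑ e ∈ E0 \ T, cCoeff k e := by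
    have := Finset.card_nsmul_le_sum (E0 \ T) (cCoeff k) 1 (fun x hx => by
      have hxE : x ∈ p.edges := by
        have := Finset.mem_sdiff.mp hx
        simpa [hE0] using this.1
      exact cCoeff_pos_of_mem k hk p hxE)
    simpa using this
  omega

end Aux

/-- The `C`-induced constraint is valid for the incidence vector of every odd cycle
of `G = K_{2k+3}`: the coefficient sum over the edges of the cycle is at least `2k+1`. -/
theorem stmt_3 (k : ℕ) (hk : 1 ≤ k) (u : Fin (2 * k + 3))
    (p : (⊤ : SimpleGraph (Fin (2 * k + 3))).Walk u u)
    (hc : p.IsCycle) (hodd : Odd p.length) :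
    2 * k + 1 ≤ (p.edges.map (cCoeff k)).sum := by
  classical
  set sv : Fin (2 * k + 3) := ⟨2 * k + 1, by omega⟩ with hsvdef
  set tv : Fin (2 * k + 3) := ⟨2 * k + 2, by omega⟩ with htvdef
  have hsvtv : sv ≠ tv := by
    simp [hsvdef, htvdef, Fin.ext_iff]
  have hnodup : p.edges.Nodup := hc.edges_nodup
  -- every edge of `p` containing `sv` or `tv`, other than `s(sv,tv)`, has coefficient `k`
  have key : ∀ e ∈ p.edges, e ≠ s(sv, tv) → (sv ∈ e ∨ tv ∈ e) → cCoeff k e = k := by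
    intro e
    induction e using Sym2.ind with
    | _ x y =>
      intro he hne hmem
      have hxy : x ≠ y := (p.adj_of_mem_edges he).ne
      have hgen : ∀ z : Fin (2 * k + 3), z ≠ sv → z ≠ tv → z.val < 2 * k + 1 := by
        intro z h1 h2
        have h3 : z.val ≠ 2 * k + 1 := fun h => h1 (Fin.ext h)
        have h4 : z.val ≠ 2 * k + 2 := fun h => h2 (Fin.ext h)
        have := z.isLt
        omega
      rw [Sym2.mem_iff, Sym2.mem_iff] at hmem
      rcases hmem with (rfl | rfl) | (rfl | rfl)
      · -- x = sv
        have hy1 : y ≠ sv := fun h => hxy h.symm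
        have hy2 : y ≠ tv := fun h => hne (by rw [h])
        rw [cCoeff_mk]
        exact cCoeffFun_delta k y.val (hgen y hy1 hy2)
      · -- y = sv
        have hx1 : x ≠ sv := hxy
        have hx2 : x ≠ tv := fun h => hne (by rw [h, Sym2.eq_swap])
        rw [Sym2.eq_swap, cCoeff_mk]
        exact cCoeffFun_delta k x.val (hgen x hx1 hx2)
      · -- x = tv
        have hy1 : y ≠ tv := fun h => hxy h.symm
        have hy2 : y ≠ sv := fun h => hne (by rw [h, Sym2.eq_swap])
        rw [cCoeff_mk]
        exact cCoeffFun_delta2 k y.val (hgen y hy2 hy1)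
      · -- y = tv
        have hx1 : x ≠ tv := hxy
        have hx2 : x ≠ sv := fun h => hne (by rw [h])
        rw [Sym2.eq_swap, cCoeff_mk]
        exact cCoeffFun_delta2 k x.val (hgen x hx2 hx1)
  by_cases hst : s(sv, tv) ∈ p.edges
  · -- Case A : the edge {s,t} is used; find one more edge at each of s and t
    have hs : sv ∈ p.support := p.fst_mem_support_of_mem_edges hst
    have ht : tv ∈ p.support := p.snd_mem_support_of_mem_edges hst
    obtain ⟨e1, e2, he1, he2, hee, hse1, hse2⟩ := exists_two_edges p hc hs
    obtain ⟨f1, f2, hf1, hf2, hff, htf1, htf2⟩ := exists_two_edges p hc ht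
    have hpick : ∀ (a b : Sym2 (Fin (2 * k + 3))) (w : Fin (2 * k + 3)),
        a ∈ p.edges → b ∈ p.edges → a ≠ b → w ∈ a → w ∈ b →
        ∃ e ∈ p.edges, w ∈ e ∧ e ≠ s(sv, tv) := by
      intro a b w ha hb hab hwa hwb
      by_cases h : a = s(sv, tv)
      · exact ⟨b, hb, hwb, fun hb' => hab (h.trans hb'.symm)⟩
      · exact ⟨a, ha, hwa, h⟩
    obtain ⟨e, he, hse, hne⟩ := hpick e1 e2 sv he1 he2 hee hse1 hse2
    obtain ⟨f, hf, htfmem, hnf⟩ := hpick f1 f2 tv hf1 hf2 hff htf1 htf2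
    have hef : e ≠ f := by
      rintro rfl
      exact hne ((Sym2.mem_and_mem_iff hsvtv).mp ⟨hse, htfmem⟩)
    set E0 := p.edges.toFinset with hE0
    have hsum : (p.edges.map (cCoeff k)).sum = ∑ x ∈ E0, cCoeff k x :=
      (List.sum_toFinset _ hnodup).symm
    set T : Finset (Sym2 (Fin (2 * k + 3))) := {s(sv, tv), e, f} with hT
    have hTsub : T ⊆ E0 := by
      intro x hx
      simp only [hT, Finset.mem_insert, Finset.mem_singleton] at hx
      rcases hx with rfl | rfl | rfl <;> simp [hE0, hst, he, hf]
    have hcst : cCoeff k s(sv, tv) = 1 := by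
      rw [cCoeff_mk, hsvdef, htvdef]
      exact cCoeffFun_st k
    have hTsum : ∑ x ∈ T, cCoeff k x = 1 + (k + k) := by
      rw [hT, Finset.sum_insert (by simp [Ne.symm hne, Ne.symm hnf]),
        Finset.sum_insert (by simp [hef]), Finset.sum_singleton, hcst,
        key e he hne (Or.inl hse), key f hf hnf (Or.inr htfmem)]
    have hle : ∑ x ∈ T, cCoeff k x ≤ ∑ x ∈ E0, cCoeff k x :=
      Finset.sum_le_sum_of_subset hTsub
    omega
  · by_cases hs : sv ∈ p.support
    · -- Case B : s on the cycle, edge {s,t} unused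
      refine two_plus k hk p hc hs (fun e he hmem => ?_)
      exact key e he (fun h => hst (h ▸ he)) (Or.inl hmem)
    · by_cases ht : tv ∈ p.support
      · -- Case C : t on the cycle, edge {s,t} unused
        refine two_plus k hk p hc ht (fun e he hmem => ?_)
        exact key e he (fun h => hst (h ▸ he)) (Or.inr hmem)
      · -- Case D : the cycle stays inside C; winding-number argument
        have hsupp : ∀ x ∈ p.support, x.val < 2 * k + 1 := by
          intro x hx
          have h1 : x ≠ sv := fun h => hs (h ▸ hx)
          have h2 : x ≠ tv := fun h => ht (h ▸ hx)
          have h3 : x.val ≠ 2 * k + 1 := fun h => h1 (Fin.ext h)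
          have h4 : x.val ≠ 2 * k + 2 := fun h => h2 (Fin.ext h)
          have := x.isLt
          omega
        set S := (p.darts.map (fun d => dD k d.fst d.snd)).sum with hS
        have htel : (p.darts.map (fun d => ((d.snd.val : ℤ) - (d.fst.val : ℤ)))).sum = 0 := by
          simpa using telescope (fun v => (v.val : ℤ)) p
        have hdvd : (2 * (k : ℤ) + 1) ∣ S := by
          rw [hS, sum_map_split p.darts (fun d => dD k d.fst d.snd)
            (fun d => ((d.snd.val : ℤ) - (d.fst.val : ℤ))), htel, add_zero]
          refine List.dvd_sum ?_
          intro x hx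
          simp only [List.mem_map] at hx
          obtain ⟨d, _, rfl⟩ := hx
          exact dD_sub_dvd k d.fst d.snd
        have hm2 : S % 2 = 1 := by
          rw [hS, sum_mod_two _ (fun x hx => by
            simp only [List.mem_map] at hx
            obtain ⟨d, _, rfl⟩ := hx
            exact dD_odd k d.fst d.snd)]
          rw [List.length_map, SimpleGraph.Walk.length_darts]
          obtain ⟨m, hm⟩ := hodd
          omega
        have hS0 : S ≠ 0 := by omega
        have hleS : (2 * (k : ℤ) + 1) ≤ |S| :=
          Int.le_of_dvd (abs_pos.mpr hS0) ((dvd_abs _ _).mpr hdvd)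
        have habs : |S| ≤ (p.darts.map (fun d => |dD k d.fst d.snd|)).sum := by
          have := abs_list_sum (p.darts.map (fun d => dD k d.fst d.snd))
          rwa [List.map_map] at this
        have hcast : ((p.edges.map (cCoeff k)).sum : ℤ)
            = (p.darts.map (fun d => |dD k d.fst d.snd|)).sum := by
          have h1 : p.edges = p.darts.map SimpleGraph.Dart.edge := rfl
          rw [h1, List.map_map, Nat.cast_list_sum, List.map_map]
          congr 1
          refine List.map_congr_left (fun d hd => ?_)
          have hab : d.fst.val ≠ d.snd.val := fun h => d.adj.ne (Fin.ext h)
          have ha := hsupp d.fst (p.dart_fst_mem_support_of_mem_darts hd)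
          have hb := hsupp d.snd (p.dart_snd_mem_support_of_mem_darts hd)
          have h2 : cCoeff k d.edge = cCoeffFun k d.fst.val d.snd.val := rfl
          simp only [Function.comp]
          rw [h2, ← dD_natAbs k d.fst d.snd hab ha hb, Int.natCast_natAbs]
        have : ((2 * k + 1 : ℕ) : ℤ) ≤ ((p.edges.map (cCoeff k)).sum : ℤ) := by
          rw [hcast]
          refine le_trans ?_ (hleS.trans habs)
          push_cast
          ring_nf
          exact le_refl _
        exact_mod_cast this
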